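/- Let d_z, d_x ∈ [−1,1], let U, V ∈ SO(2), and let S = V·diag(d_z,d_x)·U. For a real 2×2 matrix M define K(M) := 1 − h₂((1+d_z)/2) − h₂((1+d_x)/2) + h₂((1+‖M e₁‖)/2) − h₂((1+M₁₁)/2). Then there exists Q_B ∈ SO(2) such that K(Q_B·S) = 1 − h₂((1+d_z)/2) − h₂((1+d_x)/2); consequently the supremum of K(Q_B·S) over Q_B ∈ SO(2) (one-side compensation) equals the supremum of K(Q_B·S·Q_A) over Q_A, Q_B ∈ SO(2) (two-side compensation). In particular any Q_B ∈ SO(2) whose first row is a scalar multiple of the first column of S achieves the equality. -/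
import Mathlib


/-- Binary entropy function (base-2 logarithm), with the convention `0 * log 0 = 0`. -/
noncomputable def h2 (p : ℝ) : ℝ := -(p * Real.logb 2 p) - (1 - p) * Real.logb 2 (1 - p)

/-- `M` is a real 2×2 special orthogonal matrix. -/
def SO2 (M : Matrix (Fin 2) (Fin 2) ℝ) : Prop := M.transpose * M = 1 ∧ M.det = 1

/-- Euclidean norm of the first column of a 2×2 real matrix. -/
noncomputable def colNorm2 (M : Matrix (Fin 2) (Fin 2) ℝ) : ℝ :=
  Real.sqrt ((M 0 0) ^ 2 + (M 1 0) ^ 2)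

lemma h2_eq (p : ℝ) : h2 p = Real.binEntropy p / Real.log 2 := by
  simp [h2, Real.binEntropy, Real.logb, Real.log_inv]; ring

lemma h2_one_sub (p : ℝ) : h2 (1 - p) = h2 p := by
  rw [h2_eq, h2_eq, Real.binEntropy_one_sub]

lemma h2_abs (m : ℝ) : h2 ((1 + m) / 2) = h2 ((1 + |m|) / 2) := by
  rcases abs_cases m with ⟨h, _⟩ | ⟨h, _⟩
  · rw [h]
  · rw [h, show (1 + -m) / 2 = 1 - (1 + m) / 2 by ring, h2_one_sub]

lemma h2_anti {a b : ℝ} (h0 : 0 ≤ a) (hab : a ≤ b) (hb1 : b ≤ 1) :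
    h2 ((1 + b) / 2) ≤ h2 ((1 + a) / 2) := by
  rw [h2_eq, h2_eq]
  have hh : Real.binEntropy ((1 + b) / 2) ≤ Real.binEntropy ((1 + a) / 2) := by
    apply Real.binEntropy_strictAntiOn.antitoneOn
    · exact ⟨by linarith, by linarith⟩
    · exact ⟨by linarith, by linarith⟩
    · linarith
  have : (0:ℝ) < Real.log 2 := Real.log_pos (by norm_num)
  gcongr

lemma norm_pres (Q : Matrix (Fin 2) (Fin 2) ℝ) (hQ : Q.transpose * Q = 1) (x0 x1 : ℝ) :
    (Q 0 0 * x0 + Q 0 1 * x1)^2 + (Q 1 0 * x0 + Q 1 1 * x1)^2 = x0^2 + x1^2 := by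
  have h00 := congrFun (congrFun hQ 0) 0
  have h01 := congrFun (congrFun hQ 0) 1
  have h11 := congrFun (congrFun hQ 1) 1
  simp [Matrix.mul_apply, Fin.sum_univ_two, Matrix.transpose_apply, Matrix.one_apply] at h00 h01 h11
  linear_combination x0^2 * h00 + 2*x0*x1*h01 + x1^2*h11

lemma mul_e0 (A B : Matrix (Fin 2) (Fin 2) ℝ) (i : Fin 2) :
    (A * B) i 0 = A i 0 * B 0 0 + A i 1 * B 1 0 := by
  simp [Matrix.mul_apply, Fin.sum_univ_two]

lemma colNorm_mul (Q M : Matrix (Fin 2) (Fin 2) ℝ) (hQ : Q.transpose * Q = 1) :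
    colNorm2 (Q * M) = colNorm2 M := by
  rw [colNorm2, colNorm2, mul_e0, mul_e0, norm_pres Q hQ]

lemma SO2_one : SO2 (1 : Matrix (Fin 2) (Fin 2) ℝ) := ⟨by simp, by simp⟩

set_option maxHeartbeats 1000000 in
theorem stmt7 (dz dx : ℝ) (hdz : dz ∈ Set.Icc (-1 : ℝ) 1) (hdx : dx ∈ Set.Icc (-1 : ℝ) 1)
    (U V : Matrix (Fin 2) (Fin 2) ℝ) (hU : SO2 U) (hV : SO2 V)
    (S : Matrix (Fin 2) (Fin 2) ℝ)
    (hS : S = V * Matrix.diagonal ![dz, dx] * U)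
    (K : Matrix (Fin 2) (Fin 2) ℝ → ℝ)
    (hK : ∀ M, K M = 1 - h2 ((1 + dz) / 2) - h2 ((1 + dx) / 2)
      + h2 ((1 + colNorm2 M) / 2) - h2 ((1 + M 0 0) / 2)) :
    (∃ QB, SO2 QB ∧ K (QB * S) = 1 - h2 ((1 + dz) / 2) - h2 ((1 + dx) / 2)) ∧
    sSup {r : ℝ | ∃ QB, SO2 QB ∧ r = K (QB * S)} =
      sSup {r : ℝ | ∃ QA QB, SO2 QA ∧ SO2 QB ∧ r = K (QB * S * QA)} ∧
    (∀ QB, SO2 QB → (∃ c : ℝ, ∀ j, QB 0 j = c * S j 0) →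
      K (QB * S) = 1 - h2 ((1 + dz) / 2) - h2 ((1 + dx) / 2)) := by
  obtain ⟨hdz1, hdz2⟩ := hdz
  obtain ⟨hdx1, hdx2⟩ := hdx
  set b : ℝ := 1 - h2 ((1 + dz) / 2) - h2 ((1 + dx) / 2) with hb
  -- column bound
  have hcol : ∀ QA : Matrix (Fin 2) (Fin 2) ℝ, QA.transpose * QA = 1 →
      colNorm2 (S * QA) ≤ 1 := by
    intro QA hQA
    have hw := congrFun (congrFun hQA 0) 0
    simp [Matrix.mul_apply, Fin.sum_univ_two, Matrix.transpose_apply, Matrix.one_apply] at hw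
    set w0 := QA 0 0; set w1 := QA 1 0
    set u0 := U 0 0 * w0 + U 0 1 * w1 with hu0
    set u1 := U 1 0 * w0 + U 1 1 * w1 with hu1
    have hu : u0^2 + u1^2 = w0^2 + w1^2 := norm_pres U hU.1 w0 w1
    have e0 : (S * QA) 0 0 = V 0 0 * (dz * u0) + V 0 1 * (dx * u1) := by
      subst hS
      simp [Matrix.mul_apply, Fin.sum_univ_two, Matrix.diagonal, hu0, hu1]
      ring
    have e1 : (S * QA) 1 0 = V 1 0 * (dz * u0) + V 1 1 * (dx * u1) := by
      subst hS
      simp [Matrix.mul_apply, Fin.sum_univ_two, Matrix.diagonal, hu0, hu1]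
      ring
    have hVn := norm_pres V hV.1 (dz * u0) (dx * u1)
    have hle : ((S * QA) 0 0)^2 + ((S * QA) 1 0)^2 ≤ 1 := by
      rw [e0, e1, hVn]
      nlinarith [hu, hw, sq_nonneg u0, sq_nonneg u1,
        mul_nonneg (show (0:ℝ) ≤ 1 - dz^2 by nlinarith) (sq_nonneg u0),
        mul_nonneg (show (0:ℝ) ≤ 1 - dx^2 by nlinarith) (sq_nonneg u1)]
    rw [colNorm2]
    calc Real.sqrt (((S*QA) 0 0)^2 + ((S*QA) 1 0)^2) ≤ Real.sqrt 1 :=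
          Real.sqrt_le_sqrt hle
      _ = 1 := Real.sqrt_one
  have hcolS : colNorm2 S ≤ 1 := by
    have := hcol 1 (by simp)
    rwa [mul_one] at this
  -- K M ≤ b whenever colNorm2 M ≤ 1
  have hKle : ∀ M : Matrix (Fin 2) (Fin 2) ℝ, colNorm2 M ≤ 1 → K M ≤ b := by
    intro M hM
    rw [hK]
    have habs : |M 0 0| ≤ colNorm2 M := by
      rw [colNorm2, ← Real.sqrt_sq_eq_abs]
      exact Real.sqrt_le_sqrt (by nlinarith [sq_nonneg (M 1 0)])
    have := h2_anti (abs_nonneg (M 0 0)) habs hM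
    rw [h2_abs (M 0 0)]
    linarith
  -- colNorm2 S and its square
  set s0 := S 0 0 with hs0
  set s1 := S 1 0 with hs1
  set n := colNorm2 S with hn
  have hnsq : n ^ 2 = s0 ^ 2 + s1 ^ 2 := by
    rw [hn, colNorm2, Real.sq_sqrt (by positivity)]
  have hn0 : 0 ≤ n := Real.sqrt_nonneg _
  -- attaining QB
  have hexist : ∃ QB, SO2 QB ∧ K (QB * S) = b := by
    by_cases hz : s0 ^ 2 + s1 ^ 2 = 0
    · refine ⟨1, SO2_one, ?_⟩
      have hs00 : s0 = 0 := by nlinarith [sq_nonneg s0, sq_nonneg s1]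
      have hnz : n = 0 := by nlinarith
      rw [one_mul, hK, ← hs0, ← hn, hs00, hnz]
      ring
    · have hnne : n ≠ 0 := by
        intro h; apply hz; rw [← hnsq, h]; ring
      set QB : Matrix (Fin 2) (Fin 2) ℝ :=
        Matrix.of ![![s0 / n, s1 / n], ![-(s1 / n), s0 / n]] with hQB
      have hQBo : QB.transpose * QB = 1 := by
        ext i j
        rw [Matrix.mul_apply, Fin.sum_univ_two]
        fin_cases i <;> fin_cases j <;>
          simp [hQB, Matrix.one_apply] <;> field_simp [hnne] <;>
          first
            | linear_combination hnsq.symm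
            | linear_combination -hnsq
            | ring
      have hQBd : QB.det = 1 := by
        rw [Matrix.det_fin_two]
        simp only [hQB, Matrix.of_apply, Matrix.cons_val', Matrix.cons_val_zero,
          Matrix.cons_val_one, Matrix.head_cons, Matrix.empty_val',
          Matrix.cons_val_fin_one, Matrix.head_fin_const]
        field_simp [hnne]
        linear_combination hnsq.symm
      refine ⟨QB, ⟨hQBo, hQBd⟩, ?_⟩
      have e00 : (QB * S) 0 0 = n := by
        rw [mul_e0]
        have q00 : QB 0 0 = s0 / n := rfl
        have q01 : QB 0 1 = s1 / n := rfl
        rw [q00, q01, ← hs0, ← hs1]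
        field_simp [hnne]
        linear_combination hnsq.symm
      have hcolQ : colNorm2 (QB * S) = n := (colNorm_mul QB S hQBo).trans hn.symm
      rw [hK, hcolQ, e00]; ring
  obtain ⟨QB₀, hQB₀, hKQB₀⟩ := hexist
  refine ⟨⟨QB₀, hQB₀, hKQB₀⟩, ?_, ?_⟩
  · -- sup equality
    have hA : IsGreatest {r : ℝ | ∃ QB, SO2 QB ∧ r = K (QB * S)} b := by
      constructor
      · exact ⟨QB₀, hQB₀, hKQB₀.symm⟩
      · rintro r ⟨Q, hQ, rfl⟩
        exact hKle _ (by rw [colNorm_mul Q S hQ.1]; exact hcolS)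
    have hB : IsGreatest {r : ℝ | ∃ QA QB, SO2 QA ∧ SO2 QB ∧ r = K (QB * S * QA)} b := by
      constructor
      · exact ⟨1, QB₀, SO2_one, hQB₀, by rw [mul_one]; exact hKQB₀.symm⟩
      · rintro r ⟨QA, Q, hQA, hQ, rfl⟩
        apply hKle
        rw [mul_assoc, colNorm_mul Q (S * QA) hQ.1]
        exact hcol QA hQA.1
    rw [hA.csSup_eq, hB.csSup_eq]
  · -- third part
    rintro QB hQB ⟨c, hc⟩
    have hrow : QB * QB.transpose = 1 := mul_eq_one_comm.mp hQB.1
    have hr00 := congrFun (congrFun hrow 0) 0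
    simp [Matrix.mul_apply, Fin.sum_univ_two, Matrix.transpose_apply, Matrix.one_apply] at hr00
    rw [hc 0, hc 1, ← hs0, ← hs1] at hr00
    -- hr00 : c * s0 * (c * s0) + c * s1 * (c * s1) = 1
    have e00 : (QB * S) 0 0 = c * (s0 ^ 2 + s1 ^ 2) := by
      rw [mul_e0, hc 0, hc 1, ← hs0, ← hs1]; ring
    have hm2 : ((QB * S) 0 0) ^ 2 = n ^ 2 := by
      rw [e00]
      linear_combination (s0 ^ 2 + s1 ^ 2) * hr00 - hnsq
    have hmabs : |(QB * S) 0 0| = n := by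
      rw [← Real.sqrt_sq_eq_abs, hm2, Real.sqrt_sq hn0]
    have hcolQ : colNorm2 (QB * S) = n := (colNorm_mul QB S hQB.1).trans hn.symm
    rw [hK, hcolQ, h2_abs ((QB * S) 0 0), hmabs]
    ring
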